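/- The function q ↦ ∑_{k,r≥0} (-1)^k (1+2r)(1+r+k) q^{k²+2kr+2k+r}, i.e. the m=1 Kac–Wakimoto series, has the property that its lowest-order term is q⁰ with coefficient 1, and more generally for arbitrary m the series KW-sum ∑ over x_j ∈ ℤ_{>0}, y_j ∈ 1/2+ℤ_{≥0}, x_j > y_j of (2^m/(m!(∏_j(2j-1)!)²)) V_m(x,y) ∏_j q^{(x_j²-y_j²)/2}(-1)^{x_j-y_j-1/2} has lowest exponent m(2m+1)/8 with coefficient 1. -/

import Mathlib

open Nat

/-- `V_m(x,y) = ∏_{i<j}(x_i²-x_j²)(y_i²-y_j²) · ∏_j x_j y_j` with real arguments. -/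
noncomputable def VR (m : ℕ) (x y : Fin m → ℝ) : ℝ :=
  (∏ i : Fin m, ∏ j ∈ Finset.univ.filter (fun j => i < j),
      ((x i ^ 2 - x j ^ 2) * (y i ^ 2 - y j ^ 2))) *
    ∏ j : Fin m, x j * y j

/-- The cone of summation: `x_j ∈ ℤ_{>0}`, `y_j = y'_j + 1/2` with `y'_j ∈ ℤ_{≥0}`
and `x_j > y_j`, parametrized by pairs of tuples of naturals with `y'_j < x_j`. -/
def KWCone (m : ℕ) := {p : (Fin m → ℕ) × (Fin m → ℕ) // ∀ j, p.2 j < p.1 j}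

/-- The coefficient `(2^m/(m!(∏_j(2j-1)!)²)) V_m(x,y) ∏_j (-1)^{x_j-y_j-1/2}`. -/
noncomputable def KWcoeff (m : ℕ) (p : KWCone m) : ℝ :=
  ((2 : ℝ) ^ m / ((m ! * (∏ j ∈ Finset.range m, (2 * (j + 1) - 1)!) ^ 2 : ℕ) : ℝ)) *
    VR m (fun j => (p.val.1 j : ℝ)) (fun j => (p.val.2 j : ℝ) + 1 / 2) *
    ∏ j : Fin m, (-1 : ℝ) ^ (p.val.1 j - p.val.2 j - 1)

/-- The exponent `(1/2) ∑_j (x_j² - y_j²)`. -/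
noncomputable def KWexp (m : ℕ) (p : KWCone m) : ℝ :=
  (1 / 2) * ∑ j : Fin m, (((p.val.1 j : ℝ)) ^ 2 - ((p.val.2 j : ℝ) + 1 / 2) ^ 2)

open Finset in
lemma KW_nat_prod_shift (n : ℕ) : ∀ k, (∏ i ∈ range k, (n + i + 1)) * n ! = (n + k)! := by
  intro k
  induction k with
  | zero => simp
  | succ k ih =>
    rw [prod_range_succ, mul_right_comm, ih, ← add_assoc, factorial_succ, mul_comm]

open Finset in
lemma KW_nat_prod_sub (m : ℕ) : ∏ i ∈ range m, (m - i) = m ! := by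
  induction m with
  | zero => simp
  | succ m ih =>
    rw [prod_range_succ']
    have h : ∏ k ∈ range m, (m + 1 - (k + 1)) = ∏ k ∈ range m, (m - k) :=
      prod_congr rfl (fun i hi => by omega)
    rw [h, ih, factorial_succ, mul_comm]
    congr 1

open Finset in
lemma KW_key_finset (n : ℕ) : ∀ S : Finset ℕ, S.card = n → 0 ∉ S →
    n * (n + 1) ≤ 2 * ∑ s ∈ S, s ∧
    (2 * ∑ s ∈ S, s = n * (n + 1) → ∀ s ∈ S, s ≤ n) := by
  induction n with
  | zero =>
    intro S hc _
    rw [Finset.card_eq_zero] at hc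
    subst hc; simp
  | succ n ih =>
    intro S hc h0
    have hne : S.Nonempty := Finset.card_pos.mp (by omega)
    set M := S.max' hne with hM
    have hMS : M ∈ S := S.max'_mem hne
    have hle : ∀ s ∈ S, s ≤ M := fun s hs => S.le_max' s hs
    have hsub : S ⊆ Finset.Icc 1 M := by
      intro s hs
      rw [Finset.mem_Icc]
      refine ⟨?_, hle s hs⟩
      rcases Nat.eq_zero_or_pos s with h | h
      · exact absurd (h ▸ hs) h0
      · omega
    have hMn : n + 1 ≤ M := by
      have := Finset.card_le_card hsub
      rw [Nat.card_Icc] at this; omega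
    have hS' := ih (S.erase M) (by rw [Finset.card_erase_of_mem hMS, hc]; omega)
      (fun h => h0 (Finset.mem_of_mem_erase h))
    have hsum : ∑ s ∈ S, s = (∑ s ∈ S.erase M, s) + M := (Finset.sum_erase_add S _ hMS).symm
    constructor
    · nlinarith [hS'.1]
    · intro heq s hs
      have h1 : M = n + 1 := by nlinarith [hS'.1]
      have h2 : 2 * ∑ s ∈ S.erase M, s = n * (n + 1) := by nlinarith
      have h3 := hS'.2 h2
      by_cases hsM : s = M
      · omega
      · exact le_trans (h3 s (Finset.mem_erase.mpr ⟨hsM, hs⟩)) (by omega)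

open Finset in
lemma KW_sum_min (m : ℕ) (x : Fin m → ℕ) (hinj : Function.Injective x)
    (hpos : ∀ j, 0 < x j) :
    m * (m + 1) ≤ 2 * ∑ j, x j ∧ (2 * ∑ j, x j = m * (m + 1) → ∀ j, x j ≤ m) := by
  classical
  have hcard : (Finset.image x univ).card = m := by
    rw [Finset.card_image_of_injective _ hinj, Finset.card_univ, Fintype.card_fin]
  have h0 : (0 : ℕ) ∉ Finset.image x univ := by
    intro h
    obtain ⟨j, -, hj⟩ := Finset.mem_image.mp h
    have := hpos j; omega
  have hsum : ∑ s ∈ Finset.image x univ, s = ∑ j, x j :=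
    Finset.sum_image (fun a _ b _ h => hinj h)
  have hk := KW_key_finset m (Finset.image x univ) hcard h0
  rw [hsum] at hk
  exact ⟨hk.1, fun he j => hk.2 he (x j) (Finset.mem_image_of_mem x (mem_univ j))⟩

lemma KW_term_ge (x y : ℕ) (h : y < x) :
    (x : ℝ) - 1/4 ≤ (x : ℝ)^2 - ((y : ℝ) + 1/2)^2 := by
  have h1 : (y : ℝ) + 1 ≤ (x : ℝ) := by exact_mod_cast h
  have h2 : (0 : ℝ) ≤ (y : ℝ) := Nat.cast_nonneg y
  nlinarith [mul_nonneg (by linarith : (0:ℝ) ≤ (x:ℝ) - 1 - (y:ℝ))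
    (by linarith : (0:ℝ) ≤ (x:ℝ) + (y:ℝ))]

lemma KW_term_eq (x y : ℕ) (h : y < x)
    (he : (x : ℝ)^2 - ((y : ℝ) + 1/2)^2 = (x : ℝ) - 1/4) : y + 1 = x := by
  have h1 : (y : ℝ) + 1 ≤ (x : ℝ) := by exact_mod_cast h
  have h2 : (0 : ℝ) ≤ (y : ℝ) := Nat.cast_nonneg y
  have h3 : ((x:ℝ) - 1 - (y:ℝ)) * ((x:ℝ) + (y:ℝ)) = 0 := by linear_combination he
  rcases mul_eq_zero.mp h3 with h4 | h4
  · have h5 : ((y + 1 : ℕ) : ℝ) = ((x : ℕ) : ℝ) := by push_cast; linarith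
    exact_mod_cast h5
  · exfalso; linarith

open Finset in
lemma KW_row_val (m : ℕ) :
    (∏ i ∈ range m, ((((i:ℝ)+1)^2 - ((m:ℝ)+1)^2) * (((i:ℝ)+1/2)^2 - ((m:ℝ)+1/2)^2)))
      * (((m:ℝ)+1) * (((m:ℝ)+1/2)) * 2) = ((2*m+1)! : ℝ)^2 := by
  have hsplit : ∀ i ∈ range m,
      ((((i:ℝ)+1)^2 - ((m:ℝ)+1)^2) * (((i:ℝ)+1/2)^2 - ((m:ℝ)+1/2)^2)) =
        ((m:ℝ)-(i:ℝ))^2 * (((m:ℝ)+(i:ℝ)+1) * ((m:ℝ)+(i:ℝ)+2)) := by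
    intro i _; ring
  rw [prod_congr rfl hsplit, prod_mul_distrib, prod_mul_distrib, prod_pow]
  have h1 : ∏ i ∈ range m, ((m:ℝ) - (i:ℝ)) = (m ! : ℝ) := by
    rw [← KW_nat_prod_sub m]
    push_cast
    refine prod_congr rfl (fun i hi => ?_)
    rw [Nat.cast_sub (le_of_lt (mem_range.mp hi))]
  have h2 : (∏ i ∈ range m, ((m:ℝ) + (i:ℝ) + 1)) * (m ! : ℝ) = ((2*m)! : ℝ) := by
    have h := congrArg (fun n : ℕ => (n : ℝ)) (KW_nat_prod_shift m m)
    push_cast at h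
    convert h using 3 <;> ring_nf
  have h3 : (∏ i ∈ range m, ((m:ℝ) + (i:ℝ) + 2)) * ((m+1)! : ℝ) = ((2*m+1)! : ℝ) := by
    have h := congrArg (fun n : ℕ => (n : ℝ)) (KW_nat_prod_shift (m+1) m)
    push_cast at h
    convert h using 3 <;> ring_nf
  set X := ∏ i ∈ range m, ((m:ℝ) + (i:ℝ) + 1)
  set Y := ∏ i ∈ range m, ((m:ℝ) + (i:ℝ) + 2)
  have ha : (m ! : ℝ) ≠ 0 := Nat.cast_ne_zero.mpr (factorial_ne_zero m)
  have hb : ((m+1)! : ℝ) ≠ 0 := Nat.cast_ne_zero.mpr (factorial_ne_zero _)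
  have hX : X = ((2*m)! : ℝ) / (m ! : ℝ) := by rw [eq_div_iff ha]; exact h2
  have hY : Y = ((2*m+1)! : ℝ) / ((m+1)! : ℝ) := by rw [eq_div_iff hb]; exact h3
  have hfs : ((2*m+1)! : ℝ) = (2*(m:ℝ)+1) * ((2*m)! : ℝ) := by
    have h : (2*m+1)! = (2*m+1) * (2*m)! := rfl
    rw [h]; push_cast; ring
  have hfb : ((m+1)! : ℝ) = ((m:ℝ)+1) * (m ! : ℝ) := by
    have h : (m+1)! = (m+1) * m ! := rfl
    rw [h]; push_cast; ring
  rw [h1, hX, hY, hfs, hfb]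
  field_simp

noncomputable def fKW (i j : ℕ) : ℝ :=
  (((i:ℝ)+1)^2-((j:ℝ)+1)^2) * (((i:ℝ)+1/2)^2-((j:ℝ)+1/2)^2)

open Finset in
lemma KW_row_val' (m : ℕ) :
    (∏ i ∈ range m, fKW i m) * (((m:ℝ)+1) * (((m:ℝ)+1/2)) * 2) = ((2*m+1)! : ℝ)^2 := by
  simpa [fKW] using KW_row_val m

open Finset in
lemma KW_Vid (m : ℕ) :
    (∏ i ∈ range m, ∏ j ∈ Ioo i m, fKW i j)
      * (∏ j ∈ range m, (((j:ℝ)+1) * ((j:ℝ)+1/2))) * 2^m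
    = (∏ j ∈ range m, ((2*(j+1)-1)! : ℝ))^2 := by
  induction m with
  | zero => simp
  | succ m ih =>
    have hsplit : ∀ i ∈ range m, ∏ j ∈ Ioo i (m+1), fKW i j
        = (∏ j ∈ Ioo i m, fKW i j) * fKW i m := by
      intro i hi
      have he : Ioo i (m+1) = insert m (Ioo i m) := by
        ext k; simp only [Finset.mem_Ioo, Finset.mem_insert]
        rw [Finset.mem_range] at hi
        omega
      rw [he, Finset.prod_insert (by simp [Finset.mem_Ioo])]
      ring
    rw [prod_range_succ (fun i => ∏ j ∈ Ioo i (m+1), fKW i j)]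
    have hlast : ∏ j ∈ Ioo m (m+1), fKW m j = 1 := by
      have he : Ioo m (m+1) = ∅ := by
        ext k; simp only [Finset.mem_Ioo, Finset.notMem_empty, iff_false]; omega
      simp [he]
    rw [hlast, mul_one, Finset.prod_congr rfl hsplit, Finset.prod_mul_distrib]
    rw [prod_range_succ (fun j => ((j:ℝ)+1)*((j:ℝ)+1/2)),
      prod_range_succ (fun j => ((2*(j+1)-1)! : ℝ))]
    have h2m : 2*(m+1)-1 = 2*m+1 := by omega
    rw [h2m]
    have hrow := KW_row_val' m
    set A := ∏ i ∈ range m, ∏ j ∈ Ioo i m, fKW i j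
    set C := ∏ i ∈ range m, fKW i m
    set B := ∏ j ∈ range m, (((j:ℝ)+1)*((j:ℝ)+1/2))
    set P := ∏ j ∈ range m, ((2*(j+1)-1)! : ℝ)
    linear_combination (C * ((((m:ℝ))+1)*(((m:ℝ))+1/2)) * 2) * ih + P^2 * hrow

open Finset in
lemma KW_fin_double_prod (m : ℕ) (F : ℕ → ℕ → ℝ) :
    ∏ i : Fin m, ∏ j ∈ Finset.univ.filter (fun j => i < j), F i.val j.val
      = ∏ i ∈ range m, ∏ j ∈ Ioo i m, F i j := by
  have h1 : ∀ i : Fin m, ∏ j ∈ Finset.univ.filter (fun j => i < j), F i.val j.val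
      = ∏ j ∈ Ioo i.val m, F i.val j := by
    intro i
    rw [Finset.prod_filter]
    have h2 : ∀ j : Fin m, (if i < j then F i.val j.val else 1)
        = (fun k => if i.val < k then F i.val k else 1) j.val := by
      intro j; simp only [Fin.lt_def]
    rw [Finset.prod_congr rfl (fun j _ => h2 j),
      Fin.prod_univ_eq_prod_range (fun k => if i.val < k then F i.val k else 1) m,
      ← Finset.prod_filter]
    congr 1
    ext k
    simp [Finset.mem_Ioo]
    omega
  rw [Finset.prod_congr rfl (fun i _ => h1 i),
    Fin.prod_univ_eq_prod_range (fun i => ∏ j ∈ Ioo i m, F i j) m]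

open Finset in
lemma KW_double_prod_perm (m : ℕ) (F : Fin m → Fin m → ℝ) (hF : ∀ i j, F i j = F j i)
    (σ : Equiv.Perm (Fin m)) :
    ∏ i : Fin m, ∏ j ∈ Finset.univ.filter (fun j => i < j), F (σ i) (σ j)
      = ∏ i : Fin m, ∏ j ∈ Finset.univ.filter (fun j => i < j), F i j := by
  have conv : ∀ G : Fin m → Fin m → ℝ,
      ∏ i : Fin m, ∏ j ∈ Finset.univ.filter (fun j => i < j), G i j
        = ∏ x ∈ (Finset.univ ×ˢ Finset.univ).filter (fun x : Fin m × Fin m => x.1 < x.2),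
            G x.1 x.2 := by
    intro G
    rw [Finset.prod_filter, Finset.prod_product]
    refine Finset.prod_congr rfl fun i _ => ?_
    rw [Finset.prod_filter]
  rw [conv, conv]
  refine Finset.prod_nbij'
    (fun x => if σ x.1 < σ x.2 then (σ x.1, σ x.2) else (σ x.2, σ x.1))
    (fun x => if σ⁻¹ x.1 < σ⁻¹ x.2 then (σ⁻¹ x.1, σ⁻¹ x.2) else (σ⁻¹ x.2, σ⁻¹ x.1))
    ?_ ?_ ?_ ?_ ?_
  · intro x hx
    simp only [Finset.mem_filter, Finset.mem_product, Finset.mem_univ, true_and] at hx ⊢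
    have hne : σ x.1 ≠ σ x.2 := fun h => absurd (σ.injective h) (ne_of_lt hx)
    rcases lt_or_gt_of_ne hne with h | h
    · rw [if_pos h]; exact h
    · rw [if_neg (not_lt.mpr (le_of_lt h))]; exact h
  · intro x hx
    simp only [Finset.mem_filter, Finset.mem_product, Finset.mem_univ, true_and] at hx ⊢
    have hne : σ⁻¹ x.1 ≠ σ⁻¹ x.2 := fun h => absurd (σ⁻¹.injective h) (ne_of_lt hx)
    rcases lt_or_gt_of_ne hne with h | h
    · rw [if_pos h]; exact h
    · rw [if_neg (not_lt.mpr (le_of_lt h))]; exact h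
  · intro x hx
    simp only [Finset.mem_filter, Finset.mem_product, Finset.mem_univ, true_and] at hx
    by_cases h : σ x.1 < σ x.2
    · rw [if_pos h]
      simp [Equiv.Perm.coe_inv, Equiv.symm_apply_apply, hx]
    · rw [if_neg h]
      have h' : ¬ σ⁻¹ (σ x.2) < σ⁻¹ (σ x.1) := by
        simp only [Equiv.Perm.coe_inv, Equiv.symm_apply_apply]
        exact not_lt.mpr (le_of_lt hx)
      simp only [if_neg h', Equiv.Perm.coe_inv, Equiv.symm_apply_apply]
      rw [if_neg (lt_asymm hx)]
  · intro x hx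
    simp only [Finset.mem_filter, Finset.mem_product, Finset.mem_univ, true_and] at hx
    by_cases h : σ⁻¹ x.1 < σ⁻¹ x.2
    · rw [if_pos h]
      simp [Equiv.Perm.coe_inv, Equiv.apply_symm_apply, hx]
    · rw [if_neg h]
      have h' : ¬ σ (σ⁻¹ x.2) < σ (σ⁻¹ x.1) := by
        simp only [Equiv.Perm.coe_inv, Equiv.apply_symm_apply]
        exact not_lt.mpr (le_of_lt hx)
      simp only [if_neg h', Equiv.Perm.coe_inv, Equiv.apply_symm_apply]
      rw [if_neg (lt_asymm hx)]
  · intro x hx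
    by_cases h : σ x.1 < σ x.2
    · rw [if_pos h]
    · rw [if_neg h]; exact hF _ _

open Finset in
lemma KW_sum_range34 (m : ℕ) :
    ∑ j ∈ range m, (((j:ℝ)+1)^2 - ((j:ℝ)+1/2)^2) = (m:ℝ)*(2*(m:ℝ)+1)/4 := by
  induction m with
  | zero => simp
  | succ m ih =>
    rw [sum_range_succ, ih]
    push_cast
    ring

/-- The permutation configurations realizing the minimum. -/
def PhiKW (m : ℕ) (σ : Equiv.Perm (Fin m)) : KWCone m :=
  ⟨(fun j => (σ j).val + 1, fun j => (σ j).val), fun j => Nat.lt_succ_self _⟩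

open Finset in
lemma KW_VR_perm (m : ℕ) (σ : Equiv.Perm (Fin m)) :
    VR m (fun j => (((σ j).val + 1 : ℕ) : ℝ)) (fun j => (((σ j).val : ℕ) : ℝ) + 1/2) * 2^m
      = (∏ j ∈ range m, ((2*(j+1)-1)! : ℝ))^2 := by
  have h2 : VR m (fun j => (((σ j).val + 1 : ℕ) : ℝ)) (fun j => (((σ j).val : ℕ) : ℝ) + 1/2)
      = (∏ i ∈ range m, ∏ j ∈ Ioo i m, fKW i j)
        * (∏ j ∈ range m, (((j:ℝ)+1) * ((j:ℝ)+1/2))) := by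
    simp only [VR]
    congr 1
    · refine (Finset.prod_congr rfl fun i _ => Finset.prod_congr rfl fun j _ => ?_).trans
        (((KW_double_prod_perm m (fun a b => fKW a.val b.val)
          (fun a b => by unfold fKW; ring) σ)).trans (KW_fin_double_prod m fKW))
      unfold fKW
      push_cast
      ring
    · refine (Finset.prod_congr rfl fun j _ => ?_).trans
        ((Equiv.prod_comp σ (fun k : Fin m => ((k.val:ℝ)+1) * ((k.val:ℝ)+1/2))).trans
          (Fin.prod_univ_eq_prod_range (fun k => ((k:ℝ)+1)*((k:ℝ)+1/2)) m))
      push_cast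
      ring
  rw [h2]
  exact KW_Vid m

open Finset in
lemma KW_exp_perm (m : ℕ) (σ : Equiv.Perm (Fin m)) :
    KWexp m (PhiKW m σ) = ((m : ℝ) * (2 * m + 1)) / 8 := by
  simp only [KWexp, PhiKW]
  have h1 : ∀ j : Fin m,
      ((((σ j).val + 1 : ℕ) : ℝ))^2 - ((((σ j).val : ℕ) : ℝ) + 1/2)^2
        = (fun k : Fin m => ((k.val:ℝ)+1)^2 - ((k.val:ℝ)+1/2)^2) (σ j) := by
    intro j; push_cast; ring
  rw [Finset.sum_congr rfl (fun j _ => h1 j),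
    Equiv.sum_comp σ (fun k : Fin m => ((k.val:ℝ)+1)^2 - ((k.val:ℝ)+1/2)^2),
    Fin.sum_univ_eq_sum_range (fun k => ((k:ℝ)+1)^2-((k:ℝ)+1/2)^2) m, KW_sum_range34]
  ring

open Finset in
lemma KW_coeff_perm (m : ℕ) (σ : Equiv.Perm (Fin m)) :
    KWcoeff m (PhiKW m σ) = 1 / (m ! : ℝ) := by
  have hP : (∏ j ∈ range m, ((2*(j+1)-1)! : ℝ)) ≠ 0 :=
    Finset.prod_ne_zero_iff.mpr (fun j _ => Nat.cast_ne_zero.mpr (factorial_ne_zero _))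
  have hm : (m ! : ℝ) ≠ 0 := Nat.cast_ne_zero.mpr (factorial_ne_zero m)
  have hV := KW_VR_perm m σ
  simp only [KWcoeff, PhiKW]
  have hsign : ∏ j : Fin m, (-1:ℝ)^((σ j).val + 1 - (σ j).val - 1) = 1 := by
    apply Finset.prod_eq_one
    intro j _
    rw [show (σ j).val + 1 - (σ j).val - 1 = 0 from by omega]
    norm_num
  rw [hsign, mul_one, Nat.cast_mul, Nat.cast_pow, Nat.cast_prod]
  have hVv : VR m (fun j => (((σ j).val + 1 : ℕ) : ℝ))
      (fun j => (((σ j).val : ℕ) : ℝ) + 1/2)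
      = (∏ j ∈ range m, ((2*(j+1)-1)! : ℝ))^2 / 2^m := by
    rw [eq_div_iff (by positivity : ((2:ℝ)^m) ≠ 0)]
    exact hV
  rw [hVv]
  field_simp

/-- The lowest-order term of the `m = 1` Kac–Wakimoto series is `q⁰` with coefficient `1`,
and in general the Kac–Wakimoto cone sum has lowest exponent `m(2m+1)/8` with
coefficient `1`. -/
theorem kac_wakimoto_lowest_term (m : ℕ) (hm : 0 < m) :
    ((∑' p : {p : ℕ × ℕ // p.1 ^ 2 + 2 * p.1 * p.2 + 2 * p.1 + p.2 = 0},
        ((-1 : ℝ) ^ p.val.1 * ((1 + 2 * p.val.2 : ℕ) : ℝ) *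
          ((1 + p.val.2 + p.val.1 : ℕ) : ℝ))) = 1) ∧
    (∀ p : KWCone m, KWcoeff m p ≠ 0 → ((m : ℝ) * (2 * m + 1)) / 8 ≤ KWexp m p) ∧
    ((∑' p : {p : KWCone m // KWexp m p = ((m : ℝ) * (2 * m + 1)) / 8},
        KWcoeff m p.val) = 1) := by
  classical
  -- Part 1
  have part1 : (∑' p : {p : ℕ × ℕ // p.1 ^ 2 + 2 * p.1 * p.2 + 2 * p.1 + p.2 = 0},
      ((-1 : ℝ) ^ p.val.1 * ((1 + 2 * p.val.2 : ℕ) : ℝ) *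
        ((1 + p.val.2 + p.val.1 : ℕ) : ℝ))) = 1 := by
    have huniq : ∀ q : {p : ℕ × ℕ // p.1 ^ 2 + 2 * p.1 * p.2 + 2 * p.1 + p.2 = 0},
        q.val = ((0, 0) : ℕ × ℕ) := by
      rintro ⟨⟨a, b⟩, h⟩
      simp only at h ⊢
      have ha : a = 0 := by nlinarith
      subst ha
      have hb : b = 0 := by simpa using h
      subst hb
      rfl
    rw [tsum_eq_single (⟨(0,0), by norm_num⟩ :
        {p : ℕ × ℕ // p.1 ^ 2 + 2 * p.1 * p.2 + 2 * p.1 + p.2 = 0})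
      (fun b' hb' => absurd (Subtype.ext (huniq b')) hb')]
    norm_num
  -- main structural analysis
  have hmain : ∀ p : KWCone m, KWcoeff m p ≠ 0 →
      ((m : ℝ) * (2 * m + 1)) / 8 ≤ KWexp m p ∧
      (KWexp m p = ((m : ℝ) * (2 * m + 1)) / 8 →
        ∃ σ : Equiv.Perm (Fin m), p = PhiKW m σ) := by
    rintro ⟨⟨x, y⟩, hc⟩ hne
    have hVR : VR m (fun j => ((x j : ℕ) : ℝ)) (fun j => ((y j : ℕ) : ℝ) + 1/2) ≠ 0 := by
      intro h
      apply hne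
      simp only [KWcoeff]
      rw [show (fun j => (((⟨(x, y), hc⟩ : KWCone m).val.1 j : ℕ) : ℝ)) = fun j => ((x j : ℕ) : ℝ) from rfl]
      rw [show (fun j => (((⟨(x, y), hc⟩ : KWCone m).val.2 j : ℕ) : ℝ) + 1/2) = fun j => ((y j : ℕ) : ℝ) + 1/2 from rfl]
      rw [h]
      ring
    have hA : (∏ i : Fin m, ∏ j ∈ Finset.univ.filter (fun j => i < j),
        ((((x i : ℕ) : ℝ))^2 - (((x j : ℕ) : ℝ))^2) *
          (((((y i : ℕ) : ℝ)) + 1/2)^2 - ((((y j : ℕ) : ℝ)) + 1/2)^2)) ≠ 0 :=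
      left_ne_zero_of_mul hVR
    have hkey : ∀ a b : Fin m, a < b → x a ≠ x b := by
      intro a b h' hxx
      have h1 := Finset.prod_ne_zero_iff.mp hA a (Finset.mem_univ a)
      have h2 := Finset.prod_ne_zero_iff.mp h1 b
        (Finset.mem_filter.mpr ⟨Finset.mem_univ b, h'⟩)
      apply h2
      rw [hxx]
      ring
    have hinj : Function.Injective x := by
      intro a b hab
      by_contra hne'
      rcases Ne.lt_or_gt hne' with h | h
      · exact hkey a b h hab
      · exact hkey b a h hab.symm
    have hpos : ∀ j, 0 < x j := fun j => lt_of_le_of_lt (Nat.zero_le _) (hc j)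
    have hsm := KW_sum_min m x hinj hpos
    have hterm : ∀ j : Fin m, ((x j : ℕ) : ℝ) - 1/4
        ≤ ((x j : ℕ) : ℝ)^2 - (((y j : ℕ) : ℝ) + 1/2)^2 := fun j => KW_term_ge _ _ (hc j)
    have hsum1 : ∑ j : Fin m, (((x j : ℕ) : ℝ) - 1/4)
        ≤ ∑ j : Fin m, (((x j : ℕ) : ℝ)^2 - (((y j : ℕ) : ℝ) + 1/2)^2) :=
      Finset.sum_le_sum (fun j _ => hterm j)
    have hsumx : ((m:ℝ) * ((m:ℝ) + 1)) / 2 ≤ ∑ j : Fin m, ((x j : ℕ) : ℝ) := by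
      have h1 := hsm.1
      have hcast : ((m * (m+1) : ℕ) : ℝ) ≤ ((2 * ∑ j, x j : ℕ) : ℝ) := by exact_mod_cast h1
      push_cast at hcast
      linarith
    have hsum2 : ∑ j : Fin m, (((x j : ℕ) : ℝ) - 1/4)
        = (∑ j : Fin m, ((x j : ℕ) : ℝ)) - (m:ℝ)/4 := by
      rw [Finset.sum_sub_distrib]
      simp [Finset.card_univ]
      ring
    have hexp : KWexp m ⟨(x, y), hc⟩
        = (1/2) * ∑ j : Fin m, (((x j : ℕ) : ℝ)^2 - (((y j : ℕ) : ℝ) + 1/2)^2) := rfl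
    constructor
    · rw [hexp]
      nlinarith [hsum1, hsumx, hsum2]
    · intro heq
      rw [hexp] at heq
      have hSt : ∑ j : Fin m, (((x j : ℕ) : ℝ)^2 - (((y j : ℕ) : ℝ) + 1/2)^2)
          = (m:ℝ) * (2*(m:ℝ)+1) / 4 := by linarith
      have hSb : ∑ j : Fin m, (((x j : ℕ) : ℝ) - 1/4) = (m:ℝ) * (2*(m:ℝ)+1) / 4 := by
        nlinarith [hsum1, hsumx, hsum2]
      have hteq := (Finset.sum_eq_sum_iff_of_le (fun j _ => hterm j)).mp (by rw [hSb, hSt])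
      have hyx : ∀ j, y j + 1 = x j := fun j =>
        KW_term_eq _ _ (hc j) (hteq j (Finset.mem_univ j)).symm
      have hsx : 2 * ∑ j, x j = m * (m + 1) := by
        have h1 : (∑ j : Fin m, ((x j : ℕ) : ℝ)) = (m:ℝ) * ((m:ℝ)+1) / 2 := by
          nlinarith [hsum2, hSb]
        have h2 : ((2 * ∑ j, x j : ℕ) : ℝ) = ((m * (m+1) : ℕ) : ℝ) := by
          push_cast
          linarith
        exact_mod_cast h2
      have hxm := hsm.2 hsx
      have hlt : ∀ j, x j - 1 < m := fun j => by
        have := hxm j; have := hpos j; omega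
      have hfinj : Function.Injective (fun j => (⟨x j - 1, hlt j⟩ : Fin m)) := by
        intro a b hab
        apply hinj
        have h1 : x a - 1 = x b - 1 := congrArg Fin.val hab
        have := hpos a; have := hpos b
        omega
      obtain ⟨σ, hσ⟩ : ∃ σ : Equiv.Perm (Fin m), ∀ j, σ j = (⟨x j - 1, hlt j⟩ : Fin m) :=
        ⟨Equiv.ofBijective _ (Finite.injective_iff_bijective.mp hfinj), fun j => rfl⟩
      refine ⟨σ, Subtype.ext ?_⟩
      simp only [PhiKW]
      refine Prod.ext (funext fun j => ?_) (funext fun j => ?_)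
      · have h1 : (σ j).val = x j - 1 := congrArg Fin.val (hσ j)
        have := hpos j
        simp only [h1]
        omega
      · have h1 : (σ j).val = x j - 1 := congrArg Fin.val (hσ j)
        have := hyx j
        simp only [h1]
        omega
  refine ⟨part1, fun p hp => (hmain p hp).1, ?_⟩
  -- Part 3
  set E := {p : KWCone m // KWexp m p = ((m : ℝ) * (2 * m + 1)) / 8} with hE
  have hΦE : ∀ σ : Equiv.Perm (Fin m),
      KWexp m (PhiKW m σ) = ((m : ℝ) * (2 * m + 1)) / 8 := KW_exp_perm m
  set ΦE : Equiv.Perm (Fin m) → E := fun σ => ⟨PhiKW m σ, hΦE σ⟩ with hΦEdef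
  have hEinj : Function.Injective ΦE := by
    intro a b h
    have h1 : (fun j => (a j).val + 1) = (fun j => (b j).val + 1) :=
      congrArg (fun e : E => e.val.val.1) h
    apply Equiv.ext
    intro j
    apply Fin.ext
    have h2 := congrFun h1 j
    omega
  have hf' : ∀ e : E, e ∉ Finset.image ΦE Finset.univ → KWcoeff m e.val = 0 := by
    intro e he
    by_contra h0
    obtain ⟨σ, hσ⟩ := (hmain e.val h0).2 e.prop
    exact he (Finset.mem_image.mpr ⟨σ, Finset.mem_univ σ, (Subtype.ext hσ.symm : ΦE σ = e)⟩)
  rw [tsum_eq_sum hf', Finset.sum_image (fun a _ b _ h => hEinj h)]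
  have hval : ∀ σ ∈ Finset.univ, KWcoeff m ((ΦE σ).val) = 1 / (m ! : ℝ) := by
    intro σ _
    exact KW_coeff_perm m σ
  rw [Finset.sum_congr rfl hval, Finset.sum_const, Finset.card_univ, Fintype.card_perm,
    Fintype.card_fin, nsmul_eq_mul, mul_one_div]
  exact div_self (Nat.cast_ne_zero.mpr (factorial_ne_zero m))
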